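/- Let R be a principal ideal domain. The assignment f ↦ S_f induces a bijection between the set of GL₂(R)-orbits of binary cubic forms over R (under the twisted action A∗f = (det A)⁻¹ f(aY₁ + cY₂, bY₁ + dY₂)) and the set of isomorphism classes of cubic rings over R (commutative unital R-algebras free of rank 3 as R-modules). That is: every cubic ring over R is R-algebra isomorphic to S_f for some binary cubic form f, and two binary cubic forms f, f′ lie in the same GL₂(R)-orbit if and only if S_f and S_{f′} are isomorphic as R-algebras. -/

import Mathlib

universe u v

/-- The multiplication of the cubic ring `S_f` associated to the binary cubic form
`f = f₃Y₁³ + f₂Y₁²Y₂ + f₁Y₁Y₂² + f₀Y₂³`, on coordinates with respect to its basis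
`(1, α, β)`: `α·β = −f₀f₃`, `α² = −f₁f₃ + f₂α − f₃β`, `β² = −f₀f₂ + f₀α − f₁β`. -/
def cubicMul {R : Type*} [CommRing R] (f₀ f₁ f₂ f₃ : R) (x y : Fin 3 → R) : Fin 3 → R :=
  ![x 0 * y 0 - f₁ * f₃ * (x 1 * y 1) - f₀ * f₃ * (x 1 * y 2 + x 2 * y 1)
      - f₀ * f₂ * (x 2 * y 2),
    x 0 * y 1 + x 1 * y 0 + f₂ * (x 1 * y 1) + f₀ * (x 2 * y 2),
    x 0 * y 2 + x 2 * y 0 - f₃ * (x 1 * y 1) - f₁ * (x 2 * y 2)]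

/-- The binary cubic forms `f = f₃Y₁³ + f₂Y₁²Y₂ + f₁Y₁Y₂² + f₀Y₂³` and `f'` lie in the
same `GL₂(R)`-orbit for the twisted action `A∗f = (det A)⁻¹ f(aY₁ + cY₂, bY₁ + dY₂)`,
i.e. `f' = A∗f` for some `A = ((a,b),(c,d)) ∈ GL₂(R)` (with unit determinant `u`);
the coefficients of `A∗f` are spelled out by the four equations below. -/
def SameGL2Orbit {R : Type*} [CommRing R] (f₀ f₁ f₂ f₃ f₀' f₁' f₂' f₃' : R) : Prop :=
  ∃ a b c d : R, ∃ u : Rˣ, (u : R) = a * d - b * c ∧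
    (u : R) * f₃' = f₃ * a ^ 3 + f₂ * a ^ 2 * b + f₁ * a * b ^ 2 + f₀ * b ^ 3 ∧
    (u : R) * f₂' = 3 * f₃ * a ^ 2 * c + f₂ * (a ^ 2 * d + 2 * a * b * c)
        + f₁ * (2 * a * b * d + b ^ 2 * c) + 3 * f₀ * b ^ 2 * d ∧
    (u : R) * f₁' = 3 * f₃ * a * c ^ 2 + f₂ * (2 * a * c * d + b * c ^ 2)
        + f₁ * (a * d ^ 2 + 2 * b * c * d) + 3 * f₀ * b * d ^ 2 ∧
    (u : R) * f₀' = f₃ * c ^ 3 + f₂ * c ^ 2 * d + f₁ * c * d ^ 2 + f₀ * d ^ 3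

/-- The cubic rings `S_f` and `S_{f'}` are isomorphic as `R`-algebras: there is an
`R`-linear equivalence of the underlying rank-`3` free modules carrying `1` to `1` and
intertwining the two multiplications. -/
def CubicRingsIsomorphic {R : Type*} [CommRing R] (f₀ f₁ f₂ f₃ f₀' f₁' f₂' f₃' : R) :
    Prop :=
  ∃ e : (Fin 3 → R) ≃ₗ[R] (Fin 3 → R),
    e ![1, 0, 0] = ![1, 0, 0] ∧
    ∀ x y : Fin 3 → R,
      e (cubicMul f₀' f₁' f₂' f₃' x y) = cubicMul f₀ f₁ f₂ f₃ (e x) (e y)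


section Aux
variable {R : Type u} [CommRing R] [IsDomain R] {S : Type v} [CommRing S] [Algebra R S]

lemma basis_cons_one [Module.Free R S] (h1 : (1 : S) ≠ 0) {k : ℕ}
    (m : Module.Basis (Fin k) R (S ⧸ (Submodule.span R {(1 : S)}))) (w : Fin k → S)
    (hw : ∀ i, Submodule.mkQ (Submodule.span R {(1 : S)}) (w i) = m i) :
    LinearIndependent R (Fin.cons (1 : S) w : Fin (k + 1) → S) ∧
      Submodule.span R (Set.range (Fin.cons (1 : S) w : Fin (k + 1) → S)) = ⊤ := by
  have hmk1 : Submodule.mkQ (Submodule.span R {(1 : S)}) 1 = 0 := by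
    rw [Submodule.mkQ_apply, Submodule.Quotient.mk_eq_zero]
    exact Submodule.mem_span_singleton_self 1
  constructor
  · rw [Fintype.linearIndependent_iff]
    intro g hg
    have hg' := congrArg (Submodule.mkQ (Submodule.span R {(1 : S)})) hg
    rw [map_sum, map_zero, Fin.sum_univ_succ] at hg'
    simp only [Fin.cons_zero, Fin.cons_succ, map_smul, hmk1, smul_zero, hw] at hg'
    rw [zero_add] at hg'
    have htail : ∀ i : Fin k, g i.succ = 0 :=
      Fintype.linearIndependent_iff.mp m.linearIndependent _ hg'
    have hzero : g 0 • (1 : S) = 0 := by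
      rw [Fin.sum_univ_succ] at hg
      simp only [Fin.cons_zero, Fin.cons_succ] at hg
      calc g 0 • (1 : S) = g 0 • (1 : S) + ∑ i : Fin k, g i.succ • w i := by
            rw [Finset.sum_congr rfl fun i _ => by rw [htail i, zero_smul], Finset.sum_const,
              smul_zero, add_zero]
        _ = 0 := hg
    have h0 : g 0 = 0 := by
      rcases smul_eq_zero.mp hzero with h | h
      · exact h
      · exact absurd h h1
    intro i
    refine Fin.cases h0 htail i
  · rw [eq_top_iff]
    rintro x -
    have hx := m.sum_repr (Submodule.mkQ _ x)
    have hmem : x - ∑ i : Fin k, m.repr (Submodule.mkQ (Submodule.span R {(1 : S)}) x) i • w i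
        ∈ Submodule.span R {(1 : S)} := by
      rw [← Submodule.Quotient.mk_eq_zero, ← Submodule.mkQ_apply, map_sub, map_sum]
      simp only [map_smul, hw]
      rw [hx, sub_self]
    obtain ⟨cc, hcc⟩ := Submodule.mem_span_singleton.mp hmem
    have hxeq : x = cc • (1 : S)
        + ∑ i : Fin k, m.repr (Submodule.mkQ (Submodule.span R {(1 : S)}) x) i • w i := by
      rw [hcc]; abel
    rw [hxeq]
    refine Submodule.add_mem _
      (Submodule.smul_mem _ _ (Submodule.subset_span ⟨(0 : Fin (k + 1)), rfl⟩))
      (Submodule.sum_mem _ fun i _ => Submodule.smul_mem _ _ (Submodule.subset_span ⟨i.succ, ?_⟩))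
    simp
end Aux

open Polynomial in
lemma quotient_torsionfree {R : Type u} [CommRing R] [IsDomain R] [IsPrincipalIdealRing R]
    {S : Type v} [CommRing S] [Algebra R S] [Module.Free R S] [Module.Finite R S]
    (h1 : (1 : S) ≠ 0) :
    NoZeroSMulDivisors R (S ⧸ (Submodule.span R {(1 : S)})) := by
  have hinj : Function.Injective (algebraMap R S) := by
    intro r r' h
    have : (r - r') • (1 : S) = 0 := by
      rw [sub_smul, sub_eq_zero]
      rw [Algebra.algebraMap_eq_smul_one, Algebra.algebraMap_eq_smul_one] at h
      exact h
    rcases smul_eq_zero.mp this with h' | h'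
    · exact sub_eq_zero.mp h'
    · exact absurd h' h1
  refine ⟨fun {r} {x} hrx => ?_⟩
  obtain ⟨y, rfl⟩ := Submodule.Quotient.mk_surjective _ x
  by_cases hr : r = 0
  · left; exact hr
  right
  rw [← Submodule.Quotient.mk_smul, Submodule.Quotient.mk_eq_zero,
    Submodule.mem_span_singleton] at hrx
  rw [Submodule.Quotient.mk_eq_zero, Submodule.mem_span_singleton]
  obtain ⟨cc, hcc⟩ := hrx
  -- hcc : cc • 1 = r • y
  obtain ⟨p, pmonic, hp⟩ := IsIntegral.of_finite R y
  have h2 : algebraMap R S r * y = algebraMap R S cc := by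
    rw [← Algebra.smul_def, ← hcc, Algebra.algebraMap_eq_smul_one]
  have h4 := Polynomial.scaleRoots_aeval_eq_zero (r := r) hp
  rw [h2, Polynomial.aeval_algebraMap_apply_eq_algebraMap_eval] at h4
  have h5 : (p.scaleRoots r).eval cc = 0 := by
    apply hinj
    rw [h4, map_zero]
  -- move to the fraction field
  set K := FractionRing R
  set fK := algebraMap R K with hfK
  have hrK : fK r ≠ 0 := by
    rw [hfK]
    exact (map_ne_zero_iff _ (IsFractionRing.injective R K)).mpr hr
  have h6 : Polynomial.eval₂ fK (fK cc) (p.scaleRoots r) = 0 := by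
    rw [Polynomial.eval₂_at_apply, h5, map_zero]
  have h8 := Polynomial.scaleRoots_eval₂_mul (p := p) fK (fK cc / fK r) r
  rw [mul_div_cancel₀ _ hrK, h6] at h8
  have h9 : Polynomial.eval₂ fK (fK cc / fK r) p = 0 := by
    rcases mul_eq_zero.mp h8.symm with h' | h'
    · exact absurd h' (pow_ne_zero _ hrK)
    · exact h'
  have h10 : IsIntegral R (fK cc / fK r) := ⟨p, pmonic, h9⟩
  obtain ⟨dd, hdd⟩ := IsIntegrallyClosed.isIntegral_iff.mp h10
  have hdr : dd * r = cc := by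
    apply IsFractionRing.injective R K
    rw [map_mul, hdd, div_mul_cancel₀ _ hrK]
  refine ⟨dd, ?_⟩
  have : r • (dd • (1 : S)) = r • y := by
    rw [smul_smul, mul_comm, hdr, hcc]
  exact smul_right_injective S hr this

set_option maxHeartbeats 2000000 in
lemma cubic_ring_to_form (R : Type u) [CommRing R] [IsDomain R] [IsPrincipalIdealRing R]
    (S : Type v) [CommRing S] [Algebra R S] [Module.Free R S]
    (h3 : Module.finrank R S = 3) :
    ∃ (f₀ f₁ f₂ f₃ : R) (e : S ≃ₗ[R] (Fin 3 → R)),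
      e 1 = ![1, 0, 0] ∧
      ∀ x y : S, e (x * y) = cubicMul f₀ f₁ f₂ f₃ (e x) (e y) := by
  classical
  haveI hfin : Module.Finite R S := Module.finite_of_finrank_pos (by omega)
  have h1 : (1 : S) ≠ 0 := by
    have bS := Module.finBasis R S
    haveI : Nontrivial S := nontrivial_of_ne (bS ⟨0, by omega⟩) 0 (bS.ne_zero _)
    exact one_ne_zero
  haveI hQtf := quotient_torsionfree (R := R) (S := S) h1
  haveI hQfin : Module.Finite R (S ⧸ (Submodule.span R {(1 : S)})) :=
    Module.Finite.quotient R _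
  haveI hQfree : Module.Free R (S ⧸ (Submodule.span R {(1 : S)})) :=
    Module.free_of_finite_type_torsion_free'
  set n := Module.finrank R (S ⧸ (Submodule.span R {(1 : S)})) with hn
  have m : Module.Basis (Fin n) R (S ⧸ (Submodule.span R {(1 : S)})) := Module.finBasis R _
  -- arbitrary lifts to compute n
  have hlift : ∀ q : S ⧸ (Submodule.span R {(1 : S)}), ∃ z : S,
      Submodule.mkQ (Submodule.span R {(1 : S)}) z = q :=
    fun q => Submodule.Quotient.mk_surjective _ q
  choose w0 hw0 using fun i => hlift (m i)
  obtain ⟨li0, sp0⟩ := basis_cons_one h1 m w0 hw0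
  have hn3 : n + 1 = 3 := by
    rw [← Fintype.card_fin (n + 1), ← Module.finrank_eq_card_basis (Module.Basis.mk li0 sp0.ge), h3]
  have hn2 : n = 2 := by omega
  have m2 : Module.Basis (Fin 2) R (S ⧸ (Submodule.span R {(1 : S)})) :=
    m.reindex (finCongr (by omega))
  choose w hw using fun i => hlift (m2 i)
  obtain ⟨li1, sp1⟩ := basis_cons_one h1 m2 w hw
  set b1 : Module.Basis (Fin 3) R S := Module.Basis.mk li1 sp1.ge with hb1def
  have hb1 : ⇑b1 = Fin.cons (1 : S) w := Module.Basis.coe_mk _ _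
  have hb10 : b1 0 = 1 := by rw [hb1]; rfl
  have hb11 : b1 1 = w 0 := by rw [hb1]; rfl
  have hb12 : b1 2 = w 1 := by rw [hb1]; rfl
  set P := b1.repr (w 0 * w 1) with hP
  set ω : S := w 0 - algebraMap R S (P 2) with hω
  set θ : S := w 1 - algebraMap R S (P 1) with hθ
  have hmkonst : ∀ c : R, Submodule.mkQ (Submodule.span R {(1 : S)}) (algebraMap R S c) = 0 := by
    intro c
    rw [Submodule.mkQ_apply, Submodule.Quotient.mk_eq_zero, Algebra.algebraMap_eq_smul_one]
    exact Submodule.smul_mem _ _ (Submodule.mem_span_singleton_self 1)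
  have hw2 : ∀ i : Fin 2, Submodule.mkQ (Submodule.span R {(1 : S)}) (![ω, θ] i) = m2 i := by
    intro i
    fin_cases i
    · show Submodule.mkQ _ ω = m2 0
      rw [hω, map_sub, hmkonst, sub_zero, hw 0]
    · show Submodule.mkQ _ θ = m2 1
      rw [hθ, map_sub, hmkonst, sub_zero, hw 1]
  obtain ⟨li2, sp2⟩ := basis_cons_one h1 m2 ![ω, θ] hw2
  set b : Module.Basis (Fin 3) R S := Module.Basis.mk li2 sp2.ge with hbdef
  have hb : ⇑b = Fin.cons (1 : S) ![ω, θ] := Module.Basis.coe_mk _ _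
  have hb0 : b 0 = 1 := by rw [hb]; rfl
  have hbω : b 1 = ω := by rw [hb]; rfl
  have hbθ : b 2 = θ := by rw [hb]; rfl
  -- structure constants
  have h₀ : w 0 * w 1 = algebraMap R S (P 0) * 1 + algebraMap R S (P 1) * (w 0)
      + algebraMap R S (P 2) * (w 1) := by
    have hs := b1.sum_repr (w 0 * w 1)
    rw [Fin.sum_univ_three, hb10, hb11, hb12] at hs
    simp only [Algebra.smul_def, ← hP] at hs
    rw [← hs, mul_one]
  have hC : ω * θ = algebraMap R S (P 0) + algebraMap R S (P 2) * algebraMap R S (P 1) := by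
    rw [hω, hθ]
    linear_combination h₀
  set A := b.repr (ω * ω) with hA'
  set B := b.repr (θ * θ) with hB'
  have hA : ω * ω = algebraMap R S (A 0) + algebraMap R S (A 1) * ω
      + algebraMap R S (A 2) * θ := by
    have hs := b.sum_repr (ω * ω)
    rw [Fin.sum_univ_three, hb0, hbω, hbθ] at hs
    simp only [Algebra.smul_def, ← hA'] at hs
    rw [← hs, mul_one]
  have hB : θ * θ = algebraMap R S (B 0) + algebraMap R S (B 1) * ω
      + algebraMap R S (B 2) * θ := by
    have hs := b.sum_repr (θ * θ)
    rw [Fin.sum_univ_three, hb0, hbω, hbθ] at hs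
    simp only [Algebra.smul_def, ← hB'] at hs
    rw [← hs, mul_one]
  have key : ∀ c₀ c₁ c₂ : R, c₀ • (1 : S) + c₁ • ω + c₂ • θ = 0 →
      c₀ = 0 ∧ c₁ = 0 ∧ c₂ = 0 := by
    intro c₀ c₁ c₂ hcs
    have h := Fintype.linearIndependent_iff.mp b.linearIndependent ![c₀, c₁, c₂] ?_
    · exact ⟨h 0, h 1, h 2⟩
    · rw [Fin.sum_univ_three]
      show c₀ • b 0 + c₁ • b 1 + c₂ • b 2 = 0
      rw [hb0, hbω, hbθ]
      exact hcs
  have hk1 := key (A 1 * (P 0 + P 2 * P 1) + A 2 * B 0) (A 2 * B 1 - (P 0 + P 2 * P 1))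
      (A 0 + A 2 * B 2) ?k1
  case k1 =>
    simp only [Algebra.smul_def, mul_one, map_add, map_mul, map_sub]
    linear_combination (-θ) * hA - algebraMap R S (A 2) * hB
      + (ω - algebraMap R S (A 1)) * hC
  have hk2 := key (B 1 * A 0 + B 2 * (P 0 + P 2 * P 1)) (B 0 + B 1 * A 1)
      (B 1 * A 2 - (P 0 + P 2 * P 1)) ?k2
  case k2 =>
    simp only [Algebra.smul_def, mul_one, map_add, map_mul, map_sub]
    linear_combination (-ω) * hB - algebraMap R S (B 1) * hA
      + (θ - algebraMap R S (B 2)) * hC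
  obtain ⟨-, k11, k12⟩ := hk1
  obtain ⟨-, k21, -⟩ := hk2
  have pk11 := congrArg (algebraMap R S) k11
  have pk12 := congrArg (algebraMap R S) k12
  have pk21 := congrArg (algebraMap R S) k21
  simp only [map_sub, map_add, map_mul, map_zero] at pk11 pk12 pk21
  refine ⟨B 1, -B 2, A 1, -A 2, b.equivFun, ?_, ?_⟩
  · have h := congrArg b.equivFun hb0
    rw [show b.equivFun (b 0) = _ from rfl] at h
    funext j
    rw [← hb0]
    fin_cases j <;> simp [Module.Basis.equivFun_self]
  · intro x y
    rw [← LinearEquiv.eq_symm_apply, Module.Basis.equivFun_symm_apply, Fin.sum_univ_three,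
      hb0, hbω, hbθ]
    have hx := (b.sum_equivFun x).symm
    rw [Fin.sum_univ_three, hb0, hbω, hbθ] at hx
    have hy := (b.sum_equivFun y).symm
    rw [Fin.sum_univ_three, hb0, hbω, hbθ] at hy
    conv_lhs => rw [hx, hy]
    simp only [cubicMul, Fin.isValue, Matrix.cons_val_zero, Matrix.cons_val_one,
      Matrix.head_cons, Matrix.cons_val_two, Matrix.tail_cons]
    simp only [Algebra.smul_def, mul_one, map_add, map_mul, map_sub, map_neg]
    linear_combination
      (algebraMap R S (b.equivFun x 1) * algebraMap R S (b.equivFun y 1)) * hA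
      + (algebraMap R S (b.equivFun x 2) * algebraMap R S (b.equivFun y 2)) * hB
      + (algebraMap R S (b.equivFun x 1) * algebraMap R S (b.equivFun y 2)
        + algebraMap R S (b.equivFun x 2) * algebraMap R S (b.equivFun y 1)) * hC
      - (algebraMap R S (b.equivFun x 1) * algebraMap R S (b.equivFun y 2)
        + algebraMap R S (b.equivFun x 2) * algebraMap R S (b.equivFun y 1)) * pk11
      + (algebraMap R S (b.equivFun x 1) * algebraMap R S (b.equivFun y 1)) * pk12
      + (algebraMap R S (b.equivFun x 2) * algebraMap R S (b.equivFun y 2)) * pk21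

set_option maxHeartbeats 2000000 in
lemma orbit_imp_iso {R : Type u} [CommRing R] (f₀ f₁ f₂ f₃ f₀' f₁' f₂' f₃' : R)
    (h : SameGL2Orbit f₀ f₁ f₂ f₃ f₀' f₁' f₂' f₃') :
    CubicRingsIsomorphic f₀ f₁ f₂ f₃ f₀' f₁' f₂' f₃' := by
  obtain ⟨a, b, c, d, u, hu, h3, h2, h1, h0⟩ := h
  obtain ⟨v, hvu2⟩ : ∃ v : R, v * (u : R) = 1 := ⟨_, u.inv_mul⟩
  have hvu : v * (a * d - b * c) = 1 := by rw [← hu]; exact hvu2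
  have hg0 : f₀' = v * (f₃ * c ^ 3 + f₂ * c ^ 2 * d + f₁ * c * d ^ 2 + f₀ * d ^ 3) := by
    linear_combination v * h0 - f₀' * hvu2
  have hg1 : f₁' = v * (3 * f₃ * a * c ^ 2 + f₂ * (2 * a * c * d + b * c ^ 2)
      + f₁ * (a * d ^ 2 + 2 * b * c * d) + 3 * f₀ * b * d ^ 2) := by
    linear_combination v * h1 - f₁' * hvu2
  have hg2 : f₂' = v * (3 * f₃ * a ^ 2 * c + f₂ * (a ^ 2 * d + 2 * a * b * c)
      + f₁ * (2 * a * b * d + b ^ 2 * c) + 3 * f₀ * b ^ 2 * d) := by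
    linear_combination v * h2 - f₂' * hvu2
  have hg3 : f₃' = v * (f₃ * a ^ 3 + f₂ * a ^ 2 * b + f₁ * a * b ^ 2 + f₀ * b ^ 3) := by
    linear_combination v * h3 - f₃' * hvu2
  obtain ⟨t, ht⟩ : ∃ t : R, t = v * (f₃ * a ^ 2 * c + f₂ * a * b * c + f₁ * a * b * d + f₀ * b ^ 2 * d) := ⟨_, rfl⟩
  obtain ⟨s, hs⟩ : ∃ s : R, s = -(v * (f₃ * a * c ^ 2 + f₂ * a * c * d + f₁ * b * c * d + f₀ * b * d ^ 2)) := ⟨_, rfl⟩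
  refine ⟨{ toFun := fun x => ![x 0 + t * x 1 + s * x 2, a * x 1 + c * x 2, b * x 1 + d * x 2],
            invFun := fun y => ![y 0 - t * (v * (d * y 1 - c * y 2)) - s * (v * (a * y 2 - b * y 1)),
                                 v * (d * y 1 - c * y 2), v * (a * y 2 - b * y 1)],
            map_add' := ?_, map_smul' := ?_, left_inv := ?_, right_inv := ?_ }, ?_, ?_⟩
  · intro x y
    funext i; fin_cases i <;>
      simp only [AddHom.coe_mk, Pi.add_apply, Fin.zero_eta, Fin.mk_one, Fin.isValue,
        show (⟨2, by norm_num⟩ : Fin 3) = 2 from rfl, Matrix.cons_val_zero,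
        Matrix.cons_val_one, Matrix.head_cons, Matrix.cons_val_two, Matrix.tail_cons] <;> ring
  · intro r x
    funext i; fin_cases i <;>
      simp only [AddHom.coe_mk, AddHom.toFun_eq_coe, Pi.smul_apply, smul_eq_mul,
        RingHom.id_apply, Fin.zero_eta, Fin.mk_one, Fin.isValue,
        show (⟨2, by norm_num⟩ : Fin 3) = 2 from rfl, Matrix.cons_val_zero,
        Matrix.cons_val_one, Matrix.head_cons, Matrix.cons_val_two, Matrix.tail_cons] <;> ring
  · intro x
    funext i; fin_cases i <;>
      simp only [Fin.zero_eta, Fin.mk_one, Fin.isValue, show (⟨2, by norm_num⟩ : Fin 3) = 2 from rfl,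
        Matrix.cons_val_zero, Matrix.cons_val_one, Matrix.head_cons,
        Matrix.cons_val_two, Matrix.tail_cons]
    · linear_combination (-(t * x 1) - s * x 2) * hvu
    · linear_combination (x 1) * hvu
    · linear_combination (x 2) * hvu
  · intro y
    funext i; fin_cases i <;>
      simp only [Fin.zero_eta, Fin.mk_one, Fin.isValue, show (⟨2, by norm_num⟩ : Fin 3) = 2 from rfl,
        Matrix.cons_val_zero, Matrix.cons_val_one, Matrix.head_cons,
        Matrix.cons_val_two, Matrix.tail_cons]
    · ring
    · linear_combination (y 1) * hvu
    · linear_combination (y 2) * hvu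
  · funext i; fin_cases i <;> simp
  · intro x y
    funext i
    fin_cases i <;>
      simp only [cubicMul, LinearEquiv.coe_mk, LinearMap.coe_mk, AddHom.coe_mk,
        Fin.zero_eta, Fin.mk_one, Fin.isValue, show (⟨2, by norm_num⟩ : Fin 3) = 2 from rfl,
        Matrix.cons_val_zero, Matrix.cons_val_one, Matrix.head_cons,
        Matrix.cons_val_two, Matrix.tail_cons] <;>
      rw [hg0, hg1, hg2, hg3, ht, hs]
    · linear_combination (-d ^ 2 * f₀ * f₂ * (x 2) * (y 2) - 2 * c * d * f₀ * f₃ * (x 2) * (y 2) - c ^ 2 * f₁ * f₃ * (x 2) * (y 2) - b * d * f₀ * f₂ * (x 2) * (y 1) - b * d * f₀ * f₂ * (x 1) * (y 2) - b * c * f₀ * f₃ * (x 2) * (y 1) - b * c * f₀ * f₃ * (x 1) * (y 2) + b * c * d ^ 2 * v * f₀ * f₂ * (x 2) * (y 2) + 2 * b * c ^ 2 * d * v * f₀ * f₃ * (x 2) * (y 2) + b * c ^ 3 * v * f₁ * f₃ * (x 2) * (y 2) - b ^ 2 * f₀ * f₂ * (x 1) * (y 1) + b ^ 2 * c * d * v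 * f₀ * f₂ * (x 2) * (y 1) + b ^ 2 * c * d * v * f₀ * f₂ * (x 1) * (y 2) + b ^ 2 * c ^ 2 * v * f₀ * f₃ * (x 2) * (y 1) + b ^ 2 * c ^ 2 * v * f₀ * f₃ * (x 1) * (y 2) + b ^ 3 * c * v * f₀ * f₂ * (x 1) * (y 1) - a * d * f₀ * f₃ * (x 2) * (y 1) - a * d * f₀ * f₃ * (x 1) * (y 2) - a * d ^ 3 * v * f₀ * f₂ * (x 2) * (y 2) - a * c * f₁ * f₃ * (x 2) * (y 1) - a * c * f₁ * f₃ * (x 1) * (y 2) - 2 * a * c * d ^ 2 * v * f₀ * f₃ * (x 2) * (y 2) - a * c ^ 2 * d * v * f₁ * f₃ * (x 2) * (y 2) - 2 * a * b * f₀ * f₃ * (x 1) * (y 1) - a * b * d ^ 2 * v * f₀ * f₂ * (x 2) * (y 1) - a * b * d ^ 2 * v * f₀ * f₂ * (x 1) * (y 2) + a * b * c ^ 2 * v * f₁ * f₃ * (x 2) * (y 1) + a * b * c ^ 2 * v * f₁ * f₃ * (x 1) * (y 2) - a * b ^ 2 * d * v * f₀ * f₂ * (x 1) * (y 1) + 2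 * a * b ^ 2 * c * v * f₀ * f₃ * (x 1) * (y 1) - a ^ 2 * f₁ * f₃ * (x 1) * (y 1) - a ^ 2 * d ^ 2 * v * f₀ * f₃ * (x 2) * (y 1) - a ^ 2 * d ^ 2 * v * f₀ * f₃ * (x 1) * (y 2) - a ^ 2 * c * d * v * f₁ * f₃ * (x 2) * (y 1) - a ^ 2 * c * d * v * f₁ * f₃ * (x 1) * (y 2) - 2 * a ^ 2 * b * d * v * f₀ * f₃ * (x 1) * (y 1) + a ^ 2 * b * c * v * f₁ * f₃ * (x 1) * (y 1) - a ^ 3 * d * v * f₁ * f₃ * (x 1) * (y 1)) * hvu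
    · linear_combination (d ^ 2 * f₀ * (x 2) * (y 2) + c ^ 2 * f₂ * (x 2) * (y 2) + b * d * f₀ * (x 2) * (y 1) + b * d * f₀ * (x 1) * (y 2) + b ^ 2 * f₀ * (x 1) * (y 1) + a * c * f₂ * (x 2) * (y 1) + a * c * f₂ * (x 1) * (y 2) + a ^ 2 * f₂ * (x 1) * (y 1)) * hvu
    · linear_combination (-d ^ 2 * f₁ * (x 2) * (y 2) - c ^ 2 * f₃ * (x 2) * (y 2) - b * d * f₁ * (x 2) * (y 1) - b * d * f₁ * (x 1) * (y 2) - b ^ 2 * f₁ * (x 1) * (y 1) - a * c * f₃ * (x 2) * (y 1) - a * c * f₃ * (x 1) * (y 2) - a ^ 2 * f₃ * (x 1) * (y 1)) * hvu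

set_option maxHeartbeats 1000000 in
lemma iso_imp_orbit {R : Type u} [CommRing R] (f₀ f₁ f₂ f₃ f₀' f₁' f₂' f₃' : R)
    (h : CubicRingsIsomorphic f₀ f₁ f₂ f₃ f₀' f₁' f₂' f₃') :
    SameGL2Orbit f₀ f₁ f₂ f₃ f₀' f₁' f₂' f₃' := by
  classical
  obtain ⟨e, h1, hmul⟩ := h
  have expand : ∀ p q r : R, e ![p, q, r] =
      p • (![1, 0, 0] : Fin 3 → R) + q • e ![0, 1, 0] + r • e ![0, 0, 1] := by
    intro p q r
    have hv : (![p, q, r] : Fin 3 → R)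
        = p • (![1, 0, 0] : Fin 3 → R) + q • ![0, 1, 0] + r • ![0, 0, 1] := by
      funext i; fin_cases i <;> simp
    rw [hv, map_add, map_add, map_smul, map_smul, map_smul, h1]
  have c11 : cubicMul f₀' f₁' f₂' f₃' ![0, 1, 0] ![0, 1, 0]
      = ![-(f₁' * f₃'), f₂', -f₃'] := by
    funext i; fin_cases i <;> simp [cubicMul] <;> ring
  have c12 : cubicMul f₀' f₁' f₂' f₃' ![0, 1, 0] ![0, 0, 1]
      = ![-(f₀' * f₃'), 0, 0] := by
    funext i; fin_cases i <;> simp [cubicMul]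
  have c22 : cubicMul f₀' f₁' f₂' f₃' ![0, 0, 1] ![0, 0, 1]
      = ![-(f₀' * f₂'), f₀', -f₁'] := by
    funext i; fin_cases i <;> simp [cubicMul] <;> ring
  have hm11 := hmul ![0, 1, 0] ![0, 1, 0]
  have hm12 := hmul ![0, 1, 0] ![0, 0, 1]
  have hm22 := hmul ![0, 0, 1] ![0, 0, 1]
  rw [c11, expand] at hm11
  rw [c12, expand] at hm12
  rw [c22, expand] at hm22
  have H1 := congrFun hm11 1
  have H2 := congrFun hm11 2
  have H3 := congrFun hm12 1
  have H4 := congrFun hm12 2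
  have H5 := congrFun hm22 1
  have H6 := congrFun hm22 2
  simp only [cubicMul, Pi.add_apply, Pi.smul_apply, smul_eq_mul, Fin.isValue,
    Matrix.cons_val_zero, Matrix.cons_val_one, Matrix.head_cons,
    Matrix.cons_val_two, Matrix.tail_cons, mul_zero, mul_one, zero_mul, one_mul,
    add_zero, zero_add, neg_mul, neg_zero] at H1 H2 H3 H4 H5 H6
  -- inverse data
  have hsymm1 : e.symm ![0, 1, 0]
      = ![e.symm ![0, 1, 0] 0, e.symm ![0, 1, 0] 1, e.symm ![0, 1, 0] 2] := by
    funext i; fin_cases i <;> rfl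
  have hsymm2 : e.symm ![0, 0, 1]
      = ![e.symm ![0, 0, 1] 0, e.symm ![0, 0, 1] 1, e.symm ![0, 0, 1] 2] := by
    funext i; fin_cases i <;> rfl
  have hP1 := e.apply_symm_apply ![0, 1, 0]
  have hP2 := e.apply_symm_apply ![0, 0, 1]
  rw [hsymm1, expand] at hP1
  rw [hsymm2, expand] at hP2
  have hQ1 := congrFun hP1 1
  have hQ2 := congrFun hP1 2
  have hQ3 := congrFun hP2 1
  have hQ4 := congrFun hP2 2
  simp only [Pi.add_apply, Pi.smul_apply, smul_eq_mul, Fin.isValue,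
    Matrix.cons_val_zero, Matrix.cons_val_one, Matrix.head_cons,
    Matrix.cons_val_two, Matrix.tail_cons, mul_zero, mul_one, zero_mul, one_mul,
    add_zero, zero_add] at hQ1 hQ2 hQ3 hQ4
  refine ⟨e ![0, 1, 0] 1, e ![0, 1, 0] 2, e ![0, 0, 1] 1, e ![0, 0, 1] 2,
    ⟨e ![0, 1, 0] 1 * e ![0, 0, 1] 2 - e ![0, 1, 0] 2 * e ![0, 0, 1] 1,
     e.symm ![0, 1, 0] 1 * e.symm ![0, 0, 1] 2 - e.symm ![0, 1, 0] 2 * e.symm ![0, 0, 1] 1,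
     ?_, ?_⟩, rfl, ?_, ?_, ?_, ?_⟩
  · linear_combination (e ![0, 1, 0] 2 * e.symm ![0, 0, 1] 1 + e ![0, 0, 1] 2 * e.symm ![0, 0, 1] 2) * hQ1
      - (e ![0, 1, 0] 1 * e.symm ![0, 0, 1] 1 + e ![0, 0, 1] 1 * e.symm ![0, 0, 1] 2) * hQ2 + hQ4
  · linear_combination (e ![0, 1, 0] 2 * e.symm ![0, 0, 1] 1 + e ![0, 0, 1] 2 * e.symm ![0, 0, 1] 2) * hQ1
      - (e ![0, 1, 0] 1 * e.symm ![0, 0, 1] 1 + e ![0, 0, 1] 1 * e.symm ![0, 0, 1] 2) * hQ2 + hQ4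
  · linear_combination e ![0, 1, 0] 2 * H1 - e ![0, 1, 0] 1 * H2
  · linear_combination e ![0, 0, 1] 2 * H1 - e ![0, 0, 1] 1 * H2
      + 2 * e ![0, 1, 0] 2 * H3 - 2 * e ![0, 1, 0] 1 * H4
  · linear_combination e ![0, 1, 0] 2 * H5 - e ![0, 1, 0] 1 * H6
      + 2 * e ![0, 0, 1] 2 * H3 - 2 * e ![0, 0, 1] 1 * H4
  · linear_combination e ![0, 0, 1] 2 * H5 - e ![0, 0, 1] 1 * H6

/-- **The Delone–Faddeev correspondence** over a principal ideal domain `R`: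
the assignment `f ↦ S_f` induces a bijection between `GL₂(R)`-orbits of binary cubic
forms over `R` and isomorphism classes of cubic rings over `R`.  Namely:
(1) every cubic ring over `R` — i.e. every commutative unital `R`-algebra free of rank
`3` as an `R`-module — is `R`-algebra isomorphic to `S_f` for some binary cubic form
`f`; and (2) two binary cubic forms lie in the same `GL₂(R)`-orbit if and only if the
associated cubic rings are isomorphic as `R`-algebras. -/
theorem stmt_6 (R : Type u) [CommRing R] [IsDomain R] [IsPrincipalIdealRing R] :
    (∀ (S : Type v) [CommRing S] [Algebra R S] [Module.Free R S],
      Module.finrank R S = 3 →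
      ∃ (f₀ f₁ f₂ f₃ : R) (e : S ≃ₗ[R] (Fin 3 → R)),
        e 1 = ![1, 0, 0] ∧
        ∀ x y : S, e (x * y) = cubicMul f₀ f₁ f₂ f₃ (e x) (e y)) ∧
    (∀ f₀ f₁ f₂ f₃ f₀' f₁' f₂' f₃' : R,
      SameGL2Orbit f₀ f₁ f₂ f₃ f₀' f₁' f₂' f₃' ↔
        CubicRingsIsomorphic f₀ f₁ f₂ f₃ f₀' f₁' f₂' f₃') := by
  constructor
  · intro S _ _ _ h3
    exact cubic_ring_to_form R S h3
  · intro f₀ f₁ f₂ f₃ f₀' f₁' f₂' f₃'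
    exact ⟨orbit_imp_iso f₀ f₁ f₂ f₃ f₀' f₁' f₂' f₃',
      iso_imp_orbit f₀ f₁ f₂ f₃ f₀' f₁' f₂' f₃'⟩
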